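/- Let P be a finite poset, n ≥ 1, and let 𝒥 be a poset ideal of Hom(P,[n]) with its pointwise partial order. Then the co-letterplace ideal L(𝒥) ⊆ k[x_{P×[n]}] has linear quotients: for any total order ≤ᵗ on 𝒥 extending the pointwise order, and for each φ ∈ 𝒥, the ideal quotient (ideal generated by {m_{Γψ} : ψ ∈ 𝒥, ψ <ᵗ φ}) : (m_{Γφ}) is generated by a set of variables x_{(p,i)}. -/

import Mathlib

open MvPolynomial

/-- For a poset ideal `𝒥` of `Hom(P,[n])`, the co-letterplace ideal `L(𝒥)` has linear
quotients with respect to any total order extending the pointwise partial order: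
each colon ideal `(m_{Γψ} : ψ <ᵗ φ) : m_{Γφ}` is generated by variables. -/
lemma aux_prodX {σ R ι : Type*} [CommSemiring R] (s : Finset ι) (f : ι → σ) :
    ∏ i ∈ s, (X (f i) : MvPolynomial σ R) = monomial (∑ i ∈ s, Finsupp.single (f i) 1) 1 := by
  classical
  induction s using Finset.induction with
  | empty => simp
  | insert _ _ h ih =>
    rw [Finset.prod_insert h, Finset.sum_insert h, ih, X, monomial_mul, one_mul]


theorem coletterplace_poset_ideal_linear_quotients
    (k : Type*) [Field k]
    {P : Type*} [PartialOrder P] [Fintype P]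
    (n : ℕ) (hn : 1 ≤ n)
    (𝒥 : Set (P → Fin n))
    (h𝒥mono : ∀ φ ∈ 𝒥, Monotone φ)
    (h𝒥down : ∀ φ ∈ 𝒥, ∀ ψ : P → Fin n, Monotone ψ → (∀ p, ψ p ≤ φ p) → ψ ∈ 𝒥)
    (t : (P → Fin n) → (P → Fin n) → Prop)
    (htrefl : ∀ φ ∈ 𝒥, t φ φ)
    (htantisymm : ∀ φ ∈ 𝒥, ∀ ψ ∈ 𝒥, t φ ψ → t ψ φ → φ = ψ)
    (httrans : ∀ φ ∈ 𝒥, ∀ ψ ∈ 𝒥, ∀ χ ∈ 𝒥, t φ ψ → t ψ χ → t φ χ)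
    (httotal : ∀ φ ∈ 𝒥, ∀ ψ ∈ 𝒥, t φ ψ ∨ t ψ φ)
    (hext : ∀ φ ∈ 𝒥, ∀ ψ ∈ 𝒥, (∀ p, φ p ≤ ψ p) → t φ ψ)
    (φ : P → Fin n) (hφ : φ ∈ 𝒥) :
    ∃ V : Set (P × Fin n),
      (Ideal.span ((fun ψ : P → Fin n => ∏ p : P, X (p, ψ p)) ''
          {ψ | ψ ∈ 𝒥 ∧ t ψ φ ∧ ψ ≠ φ})).colon
        (Ideal.span {∏ p : P, (X (p, φ p) : MvPolynomial (P × Fin n) k)})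
      = Ideal.span ((fun v : P × Fin n => (X v : MvPolynomial (P × Fin n) k)) '' V) := by
  classical
  set S : Set (P → Fin n) := {ψ | ψ ∈ 𝒥 ∧ t ψ φ ∧ ψ ≠ φ} with hS
  set m : (P → Fin n) → ((P × Fin n) →₀ ℕ) :=
    fun ψ => ∑ q : P, Finsupp.single (q, ψ q) 1 with hm
  have hmval : ∀ (ψ : P → Fin n) (p : P) (i : Fin n),
      m ψ (p, i) = if ψ p = i then 1 else 0 := by
    intro ψ p i
    rw [hm, Finsupp.finset_sum_apply]
    simp only [Finsupp.single_apply, Prod.mk.injEq]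
    rw [Finset.sum_eq_single p]
    · simp [eq_comm]
    · intro b _ hb; simp [hb]
    · simp
  have hprod : ∀ ψ : P → Fin n,
      (∏ p : P, (X (p, ψ p) : MvPolynomial (P × Fin n) k)) = monomial (m ψ) 1 := by
    intro ψ; exact aux_prodX _ _
  set V : Set (P × Fin n) :=
    {v | v.2 < φ v.1 ∧ Monotone (fun q => if q = v.1 then v.2 else φ q)} with hV
  -- membership of updated maps in S
  have hVS : ∀ v ∈ V, (fun q => if q = v.1 then v.2 else φ q) ∈ S := by
    rintro ⟨p, i⟩ ⟨hlt, hmono⟩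
    have hle : ∀ q, (fun q => if q = p then i else φ q) q ≤ φ q := by
      intro q; by_cases hq : q = p <;> simp [hq]
      exact le_of_lt (by simpa [hq] using hlt)
    have hmem : (fun q => if q = p then i else φ q) ∈ 𝒥 := h𝒥down φ hφ _ hmono hle
    refine ⟨hmem, hext _ hmem _ hφ hle, ?_⟩
    intro hc
    have := congrFun hc p
    simp at this
    exact absurd this (ne_of_lt hlt)
  -- each ψ ∈ S yields a good coordinate
  have hkey : ∀ ψ ∈ S, ∃ p : P, ψ p < φ p ∧ (p, ψ p) ∈ V := by
    rintro ψ ⟨hψJ, hψt, hψne⟩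
    set A : Finset P := Finset.univ.filter (fun q => ψ q < φ q) with hA
    have hAne : A.Nonempty := by
      by_contra hA0
      have h1 : ∀ q, φ q ≤ ψ q := by
        intro q
        by_contra hq
        have : ψ q < φ q := lt_of_not_ge hq
        exact hA0 ⟨q, by simp [hA, this]⟩
      exact hψne (htantisymm ψ hψJ φ hφ hψt (hext φ hφ ψ hψJ h1))
    obtain ⟨p, hpA, hpmin⟩ : ∃ p ∈ A, ∀ x ∈ A, ¬ x < p := by
      obtain ⟨p, hpA, hpm⟩ := Finset.exists_minimal hAne
      exact ⟨p, hpA, fun x hx hlt => hlt.not_ge (hpm hx hlt.le)⟩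
    have hplt : ψ p < φ p := by simpa [hA] using hpA
    refine ⟨p, hplt, hplt, ?_⟩
    intro a b hab
    simp only
    by_cases ha : a = p <;> by_cases hb : b = p
    · simp [ha, hb]
    · simp only [if_pos ha, if_neg hb]
      exact le_trans (le_of_lt hplt) (h𝒥mono φ hφ ((le_of_eq ha.symm).trans hab))
    · simp only [if_neg ha, if_pos hb]
      have hab' : a ≤ p := hab.trans (le_of_eq hb)
      have halt : a < p := lt_of_le_of_ne hab' ha
      have haA : a ∉ A := fun h => hpmin a h halt
      have h3 : ¬ ψ a < φ a := by simpa [hA] using haA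
      exact le_trans (le_of_not_gt h3) (h𝒥mono ψ hψJ hab')
    · simp only [if_neg ha, if_neg hb]
      exact h𝒥mono φ hφ hab
  refine ⟨V, le_antisymm ?_ ?_⟩
  · -- colon ⊆ span V
    intro f hf
    rw [Ideal.mem_colon_span_singleton, hprod φ] at hf
    have himg : ((fun ψ : P → Fin n => ∏ p : P, (X (p, ψ p) : MvPolynomial (P × Fin n) k)) '' S)
        = (fun s => monomial s (1 : k)) '' (m '' S) := by
      rw [Set.image_image]
      exact Set.image_congr fun ψ _ => hprod ψ
    rw [himg, mem_ideal_span_monomial_image] at hf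
    have : f ∈ Ideal.span (MvPolynomial.X '' V : Set (MvPolynomial (P × Fin n) k)) := by
      rw [mem_ideal_span_X_image]
      intro d hd
      have hsupp : d + m φ ∈ (f * monomial (m φ) 1).support := by
        rw [mem_support_iff, coeff_mul_monomial, mul_one]
        exact mem_support_iff.mp hd
      obtain ⟨s, hsS, hsle⟩ := hf _ hsupp
      obtain ⟨ψ, hψS, rfl⟩ := hsS
      obtain ⟨p, hplt, hpV⟩ := hkey ψ hψS
      refine ⟨(p, ψ p), hpV, ?_⟩
      have h1 : m ψ (p, ψ p) = 1 := by rw [hmval]; simp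
      have h2 : m φ (p, ψ p) = 0 := by rw [hmval]; simp [ne_of_gt hplt]
      have := hsle (p, ψ p)
      rw [Finsupp.add_apply, h1, h2, add_zero] at this
      omega
    exact this
  · -- span V ⊆ colon
    rw [Ideal.span_le]
    rintro _ ⟨v, hvV, rfl⟩
    rw [SetLike.mem_coe, Ideal.mem_colon_span_singleton, hprod φ]
    have himg : ((fun ψ : P → Fin n => ∏ p : P, (X (p, ψ p) : MvPolynomial (P × Fin n) k)) '' S)
        = (fun s => monomial s (1 : k)) '' (m '' S) := by
      rw [Set.image_image]
      exact Set.image_congr fun ψ _ => hprod ψ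
    rw [himg, mem_ideal_span_monomial_image]
    obtain ⟨p, i⟩ := v
    set χ : P → Fin n := fun q => if q = p then i else φ q with hχ
    have hχS : χ ∈ S := hVS (p, i) hvV
    have heq : (X (p, i) : MvPolynomial (P × Fin n) k) * monomial (m φ) 1
        = monomial (Finsupp.single (p, i) 1 + m φ) 1 := by
      rw [X, monomial_mul, one_mul]
    rw [heq]
    intro d hd
    rw [support_monomial, if_neg (one_ne_zero), Finset.mem_singleton] at hd
    subst hd
    refine ⟨m χ, Set.mem_image_of_mem m hχS, ?_⟩
    intro w
    obtain ⟨q, j⟩ := w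
    rw [Finsupp.add_apply, Finsupp.single_apply, hmval, hmval]
    by_cases hq : q = p
    · subst hq
      simp only [hχ, if_pos rfl]
      by_cases hj : i = j <;> simp [hj, Prod.ext_iff]
    · simp only [hχ, if_neg hq]
      by_cases hj : φ q = j <;> simp [hj]
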